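/- The quotient ring 𝒪/(1+i)𝒪 is isomorphic to the ring M₂(𝔽₂) of 2×2 matrices over 𝔽₂; an isomorphism is determined by [1] ↦ I, [θ] ↦ [[0,1],[1,1]], [j] ↦ [[0,1],[1,0]], [θj] ↦ [[0,1],[1,1]]·[[0,1],[1,0]]. -/

import Mathlib

open Matrix GaussianInt

/-- The golden number θ = (1+√5)/2, as a complex number. -/
noncomputable def gold : ℂ := (1 + Real.sqrt 5) / 2

/-- The matrix of `θ` under the embedding of the quaternion algebra in `M₂(ℂ)`. -/
noncomputable def Tmat : Matrix (Fin 2) (Fin 2) ℂ := !![gold, 0; 0, 1 - gold]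

/-- The matrix of `j` (with `j² = i`, `jx = x̄j`). -/
noncomputable def Jmat : Matrix (Fin 2) (Fin 2) ℂ := !![0, 1; Complex.I, 0]

/-- The matrix of the central element `i`. -/
noncomputable def iOne : Matrix (Fin 2) (Fin 2) ℂ := Complex.I • (1 : Matrix (Fin 2) (Fin 2) ℂ)

/-- The order `𝒪 = ℤ[i,θ] ⊕ ℤ[i,θ]j`, as the subring of `M₂(ℂ)` generated by
`i·𝟙`, `θ` and `j`. -/
noncomputable def OO : Subring (Matrix (Fin 2) (Fin 2) ℂ) :=
  Subring.closure {iOne, Tmat, Jmat}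

lemma sqrt5_sq : (Real.sqrt 5 : ℂ) ^ 2 = 5 := by
  norm_cast
  rw [Real.sq_sqrt] <;> norm_num

lemma goldSq : gold * gold = gold + 1 := by
  have h : (Real.sqrt 5 : ℂ) * (Real.sqrt 5 : ℂ) = 5 := by
    rw [← Complex.ofReal_mul, Real.mul_self_sqrt (by norm_num : (0:ℝ) ≤ 5)]
    norm_num
  unfold gold
  field_simp
  linear_combination h

lemma sqrt5_ne : (Real.sqrt 5 : ℂ) ≠ 0 := by
  intro h
  have := sqrt5_sq
  rw [h] at this
  norm_num at this

lemma two_gold_sub_one : 2 * gold - 1 = (Real.sqrt 5 : ℂ) := by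
  unfold gold; ring

/-- coordinates of an element of 𝒪 as a matrix -/
noncomputable def Lq (a b c d : GaussianInt) : Matrix (Fin 2) (Fin 2) ℂ :=
  (a : ℂ) • 1 + (b : ℂ) • Tmat + (c : ℂ) • Jmat + (d : ℂ) • (Tmat * Jmat)

lemma TJ_eq : Tmat * Jmat = !![0, gold; Complex.I * (1 - gold), 0] := by
  unfold Tmat Jmat
  ext i j
  fin_cases i <;> fin_cases j <;>
    simp [Matrix.mul_apply, Fin.sum_univ_two] <;> ring

lemma Lq_eq (a b c d : GaussianInt) :
    Lq a b c d = !![(a : ℂ) + b * gold, (c : ℂ) + d * gold;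
      Complex.I * c + Complex.I * d * (1 - gold), (a : ℂ) + b * (1 - gold)] := by
  unfold Lq
  rw [TJ_eq]
  unfold Tmat Jmat
  ext i j
  fin_cases i <;> fin_cases j <;> simp [Matrix.one_apply] <;> ring

/-- extraction of the four ℤ[i]-coordinates (as complex numbers) -/
noncomputable def bE (M : Matrix (Fin 2) (Fin 2) ℂ) : ℂ := (M 0 0 - M 1 1) / (Real.sqrt 5 : ℂ)
noncomputable def aE (M : Matrix (Fin 2) (Fin 2) ℂ) : ℂ := M 0 0 - bE M * gold
noncomputable def dE (M : Matrix (Fin 2) (Fin 2) ℂ) : ℂ := (M 0 1 + Complex.I * M 1 0) / (Real.sqrt 5 : ℂ)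
noncomputable def cE (M : Matrix (Fin 2) (Fin 2) ℂ) : ℂ := M 0 1 - dE M * gold

lemma bE_Lq (a b c d : GaussianInt) : bE (Lq a b c d) = (b : ℂ) := by
  rw [Lq_eq, bE]
  simp only [Fin.isValue, Matrix.of_apply, Matrix.cons_val', Matrix.cons_val_zero, Matrix.cons_val_one, Matrix.head_cons, Matrix.empty_val', Matrix.cons_val_fin_one, Matrix.head_fin_const]
  rw [div_eq_iff sqrt5_ne, ← two_gold_sub_one]
  ring

lemma aE_Lq (a b c d : GaussianInt) : aE (Lq a b c d) = (a : ℂ) := by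
  rw [aE, bE_Lq, Lq_eq]
  simp only [Fin.isValue, Matrix.of_apply, Matrix.cons_val', Matrix.cons_val_zero, Matrix.cons_val_one, Matrix.head_cons, Matrix.empty_val', Matrix.cons_val_fin_one, Matrix.head_fin_const]
  ring

lemma dE_Lq (a b c d : GaussianInt) : dE (Lq a b c d) = (d : ℂ) := by
  rw [Lq_eq, dE]
  simp only [Fin.isValue, Matrix.of_apply, Matrix.cons_val', Matrix.cons_val_zero, Matrix.cons_val_one, Matrix.head_cons, Matrix.empty_val', Matrix.cons_val_fin_one, Matrix.head_fin_const]
  rw [div_eq_iff sqrt5_ne, ← two_gold_sub_one]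
  have h : Complex.I * Complex.I = -1 := Complex.I_mul_I
  linear_combination (c + d * (1 - gold)) * h

lemma cE_Lq (a b c d : GaussianInt) : cE (Lq a b c d) = (c : ℂ) := by
  rw [cE, dE_Lq, Lq_eq]
  simp only [Fin.isValue, Matrix.of_apply, Matrix.cons_val', Matrix.cons_val_zero, Matrix.cons_val_one, Matrix.head_cons, Matrix.empty_val', Matrix.cons_val_fin_one, Matrix.head_fin_const]
  ring

/-- rounding a complex number to 𝔽₂ -/
noncomputable def rr (z : ℂ) : ZMod 2 := ((⌊z.re⌋ + ⌊z.im⌋ : ℤ) : ZMod 2)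

/-- reduction ℤ[i] → 𝔽₂ -/
def red (a : GaussianInt) : ZMod 2 := ((a.re + a.im : ℤ) : ZMod 2)

lemma rr_gi (a : GaussianInt) : rr ((a : ℂ)) = red a := by
  have h1 : (toComplex a).re = ((a.re : ℤ) : ℝ) := (GaussianInt.intCast_re a).symm
  have h2 : (toComplex a).im = ((a.im : ℤ) : ℝ) := (GaussianInt.intCast_im a).symm
  rw [rr, red, h1, h2, Int.floor_intCast, Int.floor_intCast]

lemma red_mul (x y : GaussianInt) : red (x * y) = red x * red y := by
  simp only [red, Zsqrtd.re_mul, Zsqrtd.im_mul]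
  push_cast
  ring_nf
  rw [CharTwo.sub_eq_add]

lemma red_add (x y : GaussianInt) : red (x + y) = red x + red y := by
  simp only [red, Zsqrtd.re_add, Zsqrtd.im_add]
  push_cast
  ring

lemma red_one : red 1 = 1 := by decide
lemma red_zero : red 0 = 0 := by decide
lemma red_ii : red ⟨0, 1⟩ = 1 := by decide

def T2 : Matrix (Fin 2) (Fin 2) (ZMod 2) := !![0, 1; 1, 1]
def J2 : Matrix (Fin 2) (Fin 2) (ZMod 2) := !![0, 1; 1, 0]

def Phi (α β γ δ : ZMod 2) : Matrix (Fin 2) (Fin 2) (ZMod 2) :=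
  α • 1 + β • T2 + γ • J2 + δ • (T2 * J2)

/-- ψ as a bare function on matrices -/
noncomputable def psi0 (M : Matrix (Fin 2) (Fin 2) ℂ) : Matrix (Fin 2) (Fin 2) (ZMod 2) :=
  Phi (rr (aE M)) (rr (bE M)) (rr (cE M)) (rr (dE M))

lemma psi0_Lq (a b c d : GaussianInt) :
    psi0 (Lq a b c d) = Phi (red a) (red b) (red c) (red d) := by
  rw [psi0, aE_Lq, bE_Lq, cE_Lq, dE_Lq, rr_gi, rr_gi, rr_gi, rr_gi]

lemma gi_ii : (toComplex ⟨0, 1⟩ : ℂ) = Complex.I := by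
  rw [toComplex_def]; simp

def iq : GaussianInt := ⟨0, 1⟩

lemma Lq_mul (A B C D a b c d : GaussianInt) :
    Lq A B C D * Lq a b c d =
      Lq (A*a + B*b + iq*(C*c + C*d - D*d)) (A*b + B*a + B*b + iq*(D*c - C*d))
         (A*c + B*d + C*a + C*b - D*b) (A*d + B*c + B*d - C*b + D*a) := by
  rw [Lq_eq, Lq_eq, Lq_eq]
  have hg := goldSq
  ext i j
  fin_cases i <;> fin_cases j <;>
    simp [iq, Matrix.mul_apply, Fin.sum_univ_two, _root_.map_mul, _root_.map_add,
      _root_.map_sub, gi_ii]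
  · linear_combination (toComplex B * toComplex b - Complex.I * toComplex D * toComplex d) * hg
  · linear_combination (toComplex B * toComplex d - toComplex D * toComplex b) * hg
  · linear_combination (Complex.I * toComplex B * toComplex d - Complex.I * toComplex D * toComplex b) * hg
  · linear_combination (toComplex B * toComplex b - Complex.I * toComplex D * toComplex d) * hg

lemma Lq_add (a b c d a' b' c' d' : GaussianInt) :
    Lq a b c d + Lq a' b' c' d' = Lq (a+a') (b+b') (c+c') (d+d') := by
  simp only [Lq, _root_.map_add, add_smul]
  abel

lemma Lq_neg (a b c d : GaussianInt) : -Lq a b c d = Lq (-a) (-b) (-c) (-d) := by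
  simp only [Lq, _root_.map_neg, neg_smul]
  abel

lemma Lq_zero : Lq 0 0 0 0 = 0 := by simp [Lq]
lemma Lq_one : Lq 1 0 0 0 = 1 := by simp [Lq]
lemma Lq_T : Lq 0 1 0 0 = Tmat := by simp [Lq]
lemma Lq_J : Lq 0 0 1 0 = Jmat := by simp [Lq]
lemma Lq_TJ : Lq 0 0 0 1 = Tmat * Jmat := by simp [Lq]
lemma Lq_iOne : Lq iq 0 0 0 = iOne := by simp [Lq, iq, gi_ii, iOne]

lemma gsmul_mem {M : Matrix (Fin 2) (Fin 2) ℂ} (x : GaussianInt) (h : M ∈ OO) :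
    (x : ℂ) • M ∈ OO := by
  have hiO : iOne ∈ OO := Subring.subset_closure (by simp)
  have : (x : ℂ) • M = x.re • M + x.im • (iOne * M) := by
    rw [toComplex_def]
    rw [add_smul, mul_smul]
    congr 1
    · rw [Int.cast_smul_eq_zsmul]
    · rw [iOne, smul_mul_assoc, one_mul, Int.cast_smul_eq_zsmul]
  rw [this]
  exact add_mem (zsmul_mem h _) (zsmul_mem (mul_mem hiO h) _)

lemma T_mem : Tmat ∈ OO := Subring.subset_closure (by simp)
lemma J_mem : Jmat ∈ OO := Subring.subset_closure (by simp)

lemma Lq_mem (a b c d : GaussianInt) : Lq a b c d ∈ OO := by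
  refine add_mem (add_mem (add_mem ?_ ?_) ?_) ?_ <;> apply gsmul_mem
  · exact one_mem _
  · exact T_mem
  · exact J_mem
  · exact mul_mem T_mem J_mem

lemma mem_rep {x : Matrix (Fin 2) (Fin 2) ℂ} (hx : x ∈ OO) :
    ∃ a b c d : GaussianInt, x = Lq a b c d := by
  induction hx using Subring.closure_induction with
  | mem y hy =>
    rcases hy with h | h | h
    · exact ⟨iq, 0, 0, 0, by rw [h, Lq_iOne]⟩
    · exact ⟨0, 1, 0, 0, by rw [h, Lq_T]⟩
    · exact ⟨0, 0, 1, 0, by simp at h; rw [h, Lq_J]⟩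
  | zero => exact ⟨0, 0, 0, 0, Lq_zero.symm⟩
  | one => exact ⟨1, 0, 0, 0, Lq_one.symm⟩
  | add x y hx hy ihx ihy =>
    obtain ⟨a, b, c, d, rfl⟩ := ihx
    obtain ⟨a', b', c', d', rfl⟩ := ihy
    exact ⟨_, _, _, _, Lq_add ..⟩
  | neg x hx ihx =>
    obtain ⟨a, b, c, d, rfl⟩ := ihx
    exact ⟨_, _, _, _, Lq_neg ..⟩
  | mul x y hx hy ihx ihy =>
    obtain ⟨a, b, c, d, rfl⟩ := ihx
    obtain ⟨a', b', c', d', rfl⟩ := ihy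
    exact ⟨_, _, _, _, Lq_mul ..⟩

lemma Phi_mul : ∀ α β γ δ α' β' γ' δ' : ZMod 2,
    Phi (α*α' + β*β' + (γ*γ' + γ*δ' + δ*δ')) (α*β' + β*α' + β*β' + (δ*γ' + γ*δ'))
        (α*γ' + β*δ' + γ*α' + γ*β' + δ*β') (α*δ' + β*γ' + β*δ' + γ*β' + δ*α')
      = Phi α β γ δ * Phi α' β' γ' δ' := by decide

lemma Phi_injzero : ∀ α β γ δ : ZMod 2, Phi α β γ δ = 0 → α = 0 ∧ β = 0 ∧ γ = 0 ∧ δ = 0 := by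
  decide

lemma Phi_surj : ∀ m : Matrix (Fin 2) (Fin 2) (ZMod 2), ∃ α β γ δ, Phi α β γ δ = m := by
  decide

lemma red_neg (x : GaussianInt) : red (-x) = - red x := by
  simp only [red, Zsqrtd.re_neg, Zsqrtd.im_neg]
  push_cast
  ring

lemma red_sub (x y : GaussianInt) : red (x - y) = red x - red y := by
  rw [sub_eq_add_neg, red_add, red_neg, sub_eq_add_neg]

lemma gi_iq : (toComplex iq : ℂ) = Complex.I := gi_ii

lemma Phi_mul' : ∀ α β γ δ α' β' γ' δ' : ZMod 2,
    Phi (α*α' + β*β' + 1*(γ*γ' + γ*δ' - δ*δ')) (α*β' + β*α' + β*β' + 1*(δ*γ' - γ*δ'))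
        (α*γ' + β*δ' + γ*α' + γ*β' - δ*β') (α*δ' + β*γ' + β*δ' - γ*β' + δ*α')
      = Phi α β γ δ * Phi α' β' γ' δ' := by decide

lemma Phi_add : ∀ α β γ δ α' β' γ' δ' : ZMod 2,
    Phi (α+α') (β+β') (γ+γ') (δ+δ') = Phi α β γ δ + Phi α' β' γ' δ' := by decide

lemma red_Lq_mul_aux (A B C D a b c d : GaussianInt) :
    psi0 (Lq A B C D * Lq a b c d) = psi0 (Lq A B C D) * psi0 (Lq a b c d) := by
  rw [Lq_mul, psi0_Lq, psi0_Lq, psi0_Lq]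
  simp only [red_add, red_mul, red_sub, red_ii]
  exact Phi_mul' ..

noncomputable def psi : OO →+* Matrix (Fin 2) (Fin 2) (ZMod 2) where
  toFun x := psi0 x
  map_one' := by
    show psi0 ((1 : OO) : Matrix (Fin 2) (Fin 2) ℂ) = 1
    rw [OneMemClass.coe_one, ← Lq_one, psi0_Lq, red_one, red_zero]
    decide
  map_zero' := by
    show psi0 ((0 : OO) : Matrix (Fin 2) (Fin 2) ℂ) = 0
    rw [ZeroMemClass.coe_zero, ← Lq_zero, psi0_Lq, red_zero]
    decide
  map_mul' x y := by
    obtain ⟨a, b, c, d, hx⟩ := mem_rep x.2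
    obtain ⟨a', b', c', d', hy⟩ := mem_rep y.2
    show psi0 ((x : Matrix (Fin 2) (Fin 2) ℂ) * y) =
      psi0 (x : Matrix (Fin 2) (Fin 2) ℂ) * psi0 (y : Matrix (Fin 2) (Fin 2) ℂ)
    rw [hx, hy, red_Lq_mul_aux]
  map_add' x y := by
    obtain ⟨a, b, c, d, hx⟩ := mem_rep x.2
    obtain ⟨a', b', c', d', hy⟩ := mem_rep y.2
    show psi0 ((x : Matrix (Fin 2) (Fin 2) ℂ) + y) =
      psi0 (x : Matrix (Fin 2) (Fin 2) ℂ) + psi0 (y : Matrix (Fin 2) (Fin 2) ℂ)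
    rw [hx, hy, Lq_add, psi0_Lq, psi0_Lq, psi0_Lq]
    simp only [red_add]
    exact Phi_add ..

lemma red_lift : ∀ α : ZMod 2, ∃ a : GaussianInt, red a = α := by
  intro α
  fin_cases α
  · exact ⟨0, red_zero⟩
  · exact ⟨1, red_one⟩

lemma gi_one_add_iq : (toComplex (1 + iq) : ℂ) = 1 + Complex.I := by
  rw [_root_.map_add, gi_iq, _root_.map_one]

lemma Lq_gsmul (t a b c d : GaussianInt) :
    Lq (t*a) (t*b) (t*c) (t*d) = (t : ℂ) • Lq a b c d := by
  simp only [Lq, _root_.map_mul, mul_smul, smul_add]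

lemma half (a : GaussianInt) (h : red a = 0) : ∃ a', a = (1 + iq) * a' := by
  have h2 : (2:ℤ) ∣ (a.re + a.im) := by
    rwa [red, ZMod.intCast_zmod_eq_zero_iff_dvd] at h
  refine ⟨⟨(a.re+a.im)/2, (a.im-a.re)/2⟩, ?_⟩
  have hre : ((1 + iq) * ⟨(a.re+a.im)/2, (a.im-a.re)/2⟩ : GaussianInt).re = a.re := by
    simp [iq, Zsqrtd.re_mul, Zsqrtd.re_add, Zsqrtd.im_add]
    omega
  have him : ((1 + iq) * ⟨(a.re+a.im)/2, (a.im-a.re)/2⟩ : GaussianInt).im = a.im := by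
    simp [iq, Zsqrtd.im_mul, Zsqrtd.re_add, Zsqrtd.im_add]
    omega
  exact Zsqrtd.ext hre.symm him.symm

lemma psi_apply (x : OO) : psi x = psi0 (x : Matrix (Fin 2) (Fin 2) ℂ) := rfl


/-- The quotient `𝒪/(1+i)𝒪` is isomorphic to `M₂(𝔽₂)`: there is a surjective ring
homomorphism `ψ : 𝒪 → M₂(𝔽₂)` whose kernel is exactly `(1+i)𝒪`, determined by
`θ ↦ [[0,1],[1,1]]`, `j ↦ [[0,1],[1,0]]` (hence `θj` maps to their product, and
`i·𝟙 ↦ I` since `i ≡ 1 mod (1+i)`). -/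
theorem quotient_O_one_add_i :
    ∃ ψ : OO →+* Matrix (Fin 2) (Fin 2) (ZMod 2),
      Function.Surjective ψ ∧
      (∀ x : OO, ψ x = 0 ↔ ∃ y : OO,
        (x : Matrix (Fin 2) (Fin 2) ℂ) = (1 + Complex.I) • (y : Matrix (Fin 2) (Fin 2) ℂ)) ∧
      (∀ h : Tmat ∈ OO, ψ ⟨Tmat, h⟩ = !![0, 1; 1, 1]) ∧
      (∀ h : Jmat ∈ OO, ψ ⟨Jmat, h⟩ = !![0, 1; 1, 0]) ∧
      (∀ h : Tmat * Jmat ∈ OO, ψ ⟨Tmat * Jmat, h⟩ = !![0, 1; 1, 1] * !![0, 1; 1, 0]) ∧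
      (∀ h : iOne ∈ OO, ψ ⟨iOne, h⟩ = 1) := by
  refine ⟨psi, ?_, ?_, ?_, ?_, ?_, ?_⟩
  · intro m
    obtain ⟨α, β, γ, δ, hm⟩ := Phi_surj m
    obtain ⟨a, ha⟩ := red_lift α
    obtain ⟨b, hb⟩ := red_lift β
    obtain ⟨c, hc⟩ := red_lift γ
    obtain ⟨d, hd⟩ := red_lift δ
    refine ⟨⟨Lq a b c d, Lq_mem a b c d⟩, ?_⟩
    rw [psi_apply]
    show psi0 (Lq a b c d) = m
    rw [psi0_Lq, ha, hb, hc, hd, hm]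
  · intro x
    constructor
    · intro h
      obtain ⟨a, b, c, d, hx⟩ := mem_rep x.2
      rw [psi_apply, hx, psi0_Lq] at h
      obtain ⟨h1, h2, h3, h4⟩ := Phi_injzero _ _ _ _ h
      obtain ⟨a', ha⟩ := half a h1
      obtain ⟨b', hb⟩ := half b h2
      obtain ⟨c', hc⟩ := half c h3
      obtain ⟨d', hd⟩ := half d h4
      refine ⟨⟨Lq a' b' c' d', Lq_mem a' b' c' d'⟩, ?_⟩
      show (x : Matrix (Fin 2) (Fin 2) ℂ) = (1 + Complex.I) • Lq a' b' c' d'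
      rw [hx, ha, hb, hc, hd, Lq_gsmul, gi_one_add_iq]
    · rintro ⟨y, hy⟩
      obtain ⟨a, b, c, d, hrep⟩ := mem_rep y.2
      have hx : (x : Matrix (Fin 2) (Fin 2) ℂ)
          = Lq ((1+iq)*a) ((1+iq)*b) ((1+iq)*c) ((1+iq)*d) := by
        rw [hy, hrep, Lq_gsmul, gi_one_add_iq]
      rw [psi_apply, hx, psi0_Lq]
      have hr : red (1+iq) = 0 := by decide
      simp only [red_mul, hr, zero_mul]
      decide
  · intro h
    rw [psi_apply]
    show psi0 Tmat = _
    rw [← Lq_T, psi0_Lq, red_zero, red_one]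
    decide
  · intro h
    rw [psi_apply]
    show psi0 Jmat = _
    rw [← Lq_J, psi0_Lq, red_zero, red_one]
    decide
  · intro h
    rw [psi_apply]
    show psi0 (Tmat * Jmat) = _
    rw [← Lq_TJ, psi0_Lq, red_zero, red_one]
    decide
  · intro h
    rw [psi_apply]
    show psi0 iOne = _
    rw [← Lq_iOne, psi0_Lq, red_zero, show red iq = 1 from red_ii]
    decide
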